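/- Let s, k be positive integers and H a graph containing no copy of K_s. Then there exists a graph G such that G contains no copy of K_s and every colouring of the vertices of G with k colours yields a monochromatic copy of H. -/

import Mathlib

open Function Combinatorics

section FolkmanAux

variable {m : ℕ}

/-- Base picture: for each injective map `Fin m → Fin n` a fresh copy of `H`. -/
def FolkV0 (m n : ℕ) : Type := {f : Fin m → Fin n // Function.Injective f} × Fin m

instance (m n : ℕ) : Finite (FolkV0 m n) := by unfold FolkV0; infer_instance

def FolkP0 (H : SimpleGraph (Fin m)) (n : ℕ) : SimpleGraph (FolkV0 m n) where
  Adj a b := a.1 = b.1 ∧ H.Adj a.2 b.2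
  symm := ⟨by rintro a b ⟨h1, h2⟩; exact ⟨h1.symm, h2.symm⟩⟩
  loopless := ⟨by rintro a ⟨-, h⟩; exact H.irrefl h⟩

def folkPi0 (m n : ℕ) : FolkV0 m n → Fin n := fun a => a.1.1 a.2

lemma line_coe_injective {A ι : Type*} (L : Line A ι) :
    Function.Injective (L : A → ι → A) := by
  obtain ⟨j, hj⟩ := L.proper
  intro a b h
  have := congrFun h j
  rwa [L.apply_none a j hj, L.apply_none b j hj] at this

/-- The partite lemma. -/
lemma folk_partite_step {s k n : ℕ} (hs : 2 ≤ s)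
    {V : Type} [Finite V] (P : SimpleGraph V) (π : V → Fin n)
    (hP : P.CliqueFree s) (hpart : ∀ x y, P.Adj x y → π x ≠ π y) (i : Fin n) :
    ∃ (V' : Type) (_ : Finite V') (P' : SimpleGraph V') (π' : V' → Fin n),
      P'.CliqueFree s ∧ (∀ x y, P'.Adj x y → π' x ≠ π' y) ∧
      ∀ c : V' → Fin k, ∃ e : V → V', Function.Injective e ∧
        (∀ u v, P.Adj u v → P'.Adj (e u) (e v)) ∧ (∀ v, π' (e v) = π v) ∧
        ∃ α : Fin k, ∀ v, π v = i → c (e v) = α := by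
  classical
  obtain ⟨ι, ιft, hHJ⟩ := Line.exists_mono_in_high_dimension {v : V // π v = i} (Fin k)
  haveI := ιft
  set A := {v : V // π v = i}
  have : Finite (Line A ι) := by
    have hopt : Finite (Option A) := Finite.of_equiv _ (Equiv.optionEquivSumPUnit.{0,0} A).symm
    have hinj : Function.Injective (Line.idxFun (α := A) (ι := ι)) := by
      intro L L' h; cases L; cases L'; simpa using h
    exact Finite.of_injective _ hinj
  -- the embedding along a line
  let eL : Line A ι → V → (ι → A) ⊕ (Line A ι × {v : V // π v ≠ i}) := fun L v =>
    if h : π v = i then Sum.inl (L ⟨v, h⟩) else Sum.inr (L, ⟨v, h⟩)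
  have eL_inl : ∀ (L : Line A ι) (v : V) (h : π v = i), eL L v = Sum.inl (L ⟨v, h⟩) := by
    intro L v h; simp [eL, h]
  have eL_inr : ∀ (L : Line A ι) (v : V) (h : ¬ π v = i), eL L v = Sum.inr (L, ⟨v, h⟩) := by
    intro L v h; simp [eL, h]
  have eL_inj : ∀ L, Function.Injective (eL L) := by
    intro L a b h
    by_cases ha : π a = i <;> by_cases hb : π b = i
    · rw [eL_inl L a ha, eL_inl L b hb] at h
      exact congrArg Subtype.val (line_coe_injective L (Sum.inl.inj h))
    · rw [eL_inl L a ha, eL_inr L b hb] at h; exact absurd h (by simp)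
    · rw [eL_inr L a ha, eL_inl L b hb] at h; exact absurd h (by simp)
    · rw [eL_inr L a ha, eL_inr L b hb] at h
      exact congrArg Subtype.val (Prod.ext_iff.1 (Sum.inr.inj h)).2
  let P' : SimpleGraph ((ι → A) ⊕ (Line A ι × {v : V // π v ≠ i})) :=
    { Adj := fun x y => ∃ L u v, P.Adj u v ∧ x = eL L u ∧ y = eL L v
      symm := ⟨by rintro x y ⟨L, u, v, hadj, hx, hy⟩; exact ⟨L, v, u, hadj.symm, hy, hx⟩⟩
      loopless := ⟨by
        rintro x ⟨L, u, v, hadj, hx, hy⟩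
        exact P.irrefl ((eL_inj L (hx.symm.trans hy)) ▸ hadj)⟩ }
  let π' : (ι → A) ⊕ (Line A ι × {v : V // π v ≠ i}) → Fin n := fun x => match x with
    | Sum.inl _ => i
    | Sum.inr (_, v) => π v.1
  have hπ'eL : ∀ L v, π' (eL L v) = π v := by
    intro L v
    by_cases h : π v = i
    · rw [eL_inl L v h]; exact h.symm
    · rw [eL_inr L v h]
  have hpart' : ∀ x y, P'.Adj x y → π' x ≠ π' y := by
    rintro x y ⟨L, u, v, hadj, rfl, rfl⟩
    rw [hπ'eL, hπ'eL]; exact hpart _ _ hadj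
  -- reflection of adjacency along a fixed line
  have reflect : ∀ (L : Line A ι) (u v : V), P'.Adj (eL L u) (eL L v) → P.Adj u v := by
    have key : ∀ (L : Line A ι) (a b u v : V), P.Adj a b → eL L a = eL L u → eL L b = eL L v →
        ¬ π b = i → P.Adj u v := by
      intro L a b u v hadj hxa hxb hb
      by_cases hv : π v = i
      · rw [eL_inr L b hb, eL_inl L v hv] at hxb; exact absurd hxb (by simp)
      · rw [eL_inr L b hb, eL_inr L v hv] at hxb
        have hbv : b = v := congrArg Subtype.val (Prod.ext_iff.1 (Sum.inr.inj hxb)).2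
        have hau : a = u := eL_inj L hxa
        exact hau ▸ hbv ▸ hadj
    rintro L u v ⟨L', a, b, hadj, hxa, hxb⟩
    have hLL : ∀ (w : V), ¬ π w = i → ∀ (z : V), eL L' w = eL L z → L' = L := by
      intro w hw z hzz
      by_cases hz : π z = i
      · rw [eL_inr L' w hw, eL_inl L z hz] at hzz; exact absurd hzz (by simp)
      · rw [eL_inr L' w hw, eL_inr L z hz] at hzz
        exact (Prod.ext_iff.1 (Sum.inr.inj hzz)).1
    by_cases hb : π b = i
    · have ha : ¬ π a = i := fun h => hpart _ _ hadj (h.trans hb.symm)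
      have hL : L' = L := hLL a ha u hxa.symm
      subst hL
      exact (key L' b a v u hadj.symm hxb.symm hxa.symm ha).symm
    · have hL : L' = L := hLL b hb v hxb.symm
      subst hL
      exact key L' a b u v hadj hxa.symm hxb.symm hb
  refine ⟨_, by infer_instance, P', π', ?_, hpart', ?_⟩
  · -- clique-freeness
    intro t ht
    have hcard : t.card = s := ht.2
    have h2 : 2 ≤ t.card := hcard ▸ hs
    have hex : ∃ x ∈ t, ∃ (L : Line A ι) (w : {v : V // π v ≠ i}), x = Sum.inr (L, w) := by
      by_contra hcon
      push_neg at hcon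
      obtain ⟨x, hx, y, hy, hxy⟩ := Finset.one_lt_card.1 h2
      have hadj := ht.1 hx hy hxy
      have hxl : π' x = i := by
        rcases x with f | ⟨L, w⟩
        · rfl
        · exact absurd rfl (hcon _ hx L w)
      have hyl : π' y = i := by
        rcases y with f | ⟨L, w⟩
        · rfl
        · exact absurd rfl (hcon _ hy L w)
      exact hpart' x y hadj (hxl.trans hyl.symm)
    obtain ⟨x₀, hx₀, L₀, w₀, hx₀eq⟩ := hex
    have hrange : ∀ y ∈ t, ∃ u, eL L₀ u = y := by
      intro y hy
      by_cases hyx : y = x₀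
      · exact ⟨w₀.1, by rw [eL_inr L₀ w₀.1 w₀.2, hyx, hx₀eq]⟩
      · have hadj := ht.1 hx₀ hy (fun h => hyx h.symm)
        obtain ⟨L', a, b, hab, hxa, hxb⟩ := hadj
        have ha : ¬ π a = i := by
          intro h
          rw [hx₀eq, eL_inl L' a h] at hxa
          exact absurd hxa (by simp)
        rw [hx₀eq, eL_inr L' a ha] at hxa
        have hL : L' = L₀ := ((Prod.ext_iff.1 (Sum.inr.inj hxa)).1).symm
        subst hL
        exact ⟨b, hxb.symm⟩
    choose pre hpre using hrange
    let f : {y // y ∈ t} → V := fun y => pre y.1 y.2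
    have hf : ∀ y : {y // y ∈ t}, eL L₀ (f y) = y.1 := fun y => hpre y.1 y.2
    have hfinj : Function.Injective f := by
      intro y z h
      exact Subtype.ext (by rw [← hf y, ← hf z, h])
    have ht' : P.IsNClique s (Finset.univ.image f) := by
      constructor
      · rintro a ha b hb hab
        simp only [Finset.coe_image, Set.mem_image, Finset.mem_coe] at ha hb
        obtain ⟨y, -, rfl⟩ := ha
        obtain ⟨z, -, rfl⟩ := hb
        refine reflect L₀ _ _ ?_
        rw [hf y, hf z]
        exact ht.1 y.2 z.2 (fun h => hab (congrArg f (Subtype.ext h)))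
      · rw [Finset.card_image_of_injective _ hfinj, Finset.card_univ,
          Fintype.card_coe, hcard]
    exact hP _ ht'
  · -- Ramsey extraction
    intro c
    obtain ⟨L, α, hα⟩ := hHJ (fun x => c (Sum.inl x))
    refine ⟨eL L, eL_inj L, ?_, hπ'eL L, α, ?_⟩
    · intro u v h; exact ⟨L, u, v, h, rfl, rfl⟩
    · intro v hv
      rw [eL_inl L v hv]
      exact hα ⟨v, hv⟩

lemma folk_good {s k : ℕ} (hs : 2 ≤ s) (H : SimpleGraph (Fin m)) (hH : H.CliqueFree s)
    (n : ℕ) (t : ℕ) :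
    ∃ (V : Type) (_ : Finite V) (P : SimpleGraph V) (π : V → Fin n),
      P.CliqueFree s ∧ (∀ x y, P.Adj x y → π x ≠ π y) ∧
      ∀ c : V → Fin k, ∃ e : FolkV0 m n → V, Function.Injective e ∧
        (∀ u v, (FolkP0 H n).Adj u v → P.Adj (e u) (e v)) ∧
        (∀ v, π (e v) = folkPi0 m n v) ∧
        ∀ j : Fin n, (j : ℕ) < t → ∃ α : Fin k, ∀ v, folkPi0 m n v = j → c (e v) = α := by
  induction t with
  | zero =>
    have hcf0 : (FolkP0 H n).CliqueFree s := by
      intro T hT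
      have hcard := hT.2
      have h2 : 2 ≤ T.card := hcard ▸ hs
      obtain ⟨x, hx⟩ := Finset.card_pos.1 (show 0 < T.card by omega)
      have hsame : ∀ y ∈ T, y.1 = x.1 := by
        intro y hy
        by_cases h : y = x
        · rw [h]
        · exact (hT.1 hy hx h).1
      have himg : H.IsNClique s (T.image Prod.snd) := by
        constructor
        · rintro a ha b hb hab
          simp only [Finset.coe_image, Set.mem_image, Finset.mem_coe] at ha hb
          obtain ⟨y, hy, rfl⟩ := Finset.mem_image.1 ha
          obtain ⟨z, hz, rfl⟩ := Finset.mem_image.1 hb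
          exact (hT.1 hy hz (fun h => hab (congrArg Prod.snd h))).2
        · have hio : Set.InjOn Prod.snd (T : Set (FolkV0 m n)) := by
            intro y hy z hz h
            exact Prod.ext ((hsame y hy).trans (hsame z hz).symm) h
          rw [Finset.card_image_of_injOn hio]; exact hcard
      exact hH _ himg
    have hpart0 : ∀ x y, (FolkP0 H n).Adj x y → folkPi0 m n x ≠ folkPi0 m n y := by
      rintro x y ⟨h1, h2⟩ hpi
      unfold folkPi0 at hpi
      rw [h1] at hpi
      exact H.ne_of_adj h2 (y.1.2 hpi)
    exact ⟨FolkV0 m n, by infer_instance, FolkP0 H n, folkPi0 m n, hcf0, hpart0,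
      fun c => ⟨id, injective_id, fun _ _ h => h, fun _ => rfl,
        fun j hj => absurd hj (Nat.not_lt_zero _)⟩⟩
  | succ t IH =>
    obtain ⟨V, fV, P, π, hcf, hpart, hext⟩ := IH
    by_cases ht : t < n
    · obtain ⟨V', fV', P', π', hcf', hpart', hext'⟩ :=
        folk_partite_step (k := k) hs P π hcf hpart ⟨t, ht⟩
      refine ⟨V', fV', P', π', hcf', hpart', ?_⟩
      intro c
      obtain ⟨e₁, he₁inj, he₁adj, he₁π, α, hαmono⟩ := hext' c
      obtain ⟨e₀, he₀inj, he₀adj, he₀π, hmono⟩ := hext (c ∘ e₁)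
      refine ⟨e₁ ∘ e₀, he₁inj.comp he₀inj, fun u v h => he₁adj _ _ (he₀adj u v h),
        fun v => (he₁π _).trans (he₀π v), ?_⟩
      intro j hj
      rcases Nat.lt_or_ge (j : ℕ) t with hlt | hge
      · exact hmono j hlt
      · have hjt : j = ⟨t, ht⟩ := Fin.ext (show (j : ℕ) = t by omega)
        refine ⟨α, fun v hv => ?_⟩
        apply hαmono
        rw [he₀π v, hv, hjt]
    · refine ⟨V, fV, P, π, hcf, hpart, fun c => ?_⟩
      obtain ⟨e, h1, h2, h3, h4⟩ := hext c
      exact ⟨e, h1, h2, h3, fun j hj => h4 j (by have := j.isLt; omega)⟩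

end FolkmanAux

theorem stmt_13 (s k : ℕ) (hs : 1 ≤ s) (hk : 1 ≤ k)
    {m : ℕ} (H : SimpleGraph (Fin m)) (hH : H.CliqueFree s) :
    ∃ (n : ℕ) (G : SimpleGraph (Fin n)),
      G.CliqueFree s ∧
      -- G is k-vertex-Ramsey for H
      ∀ c : Fin n → Fin k, ∃ f : Fin m → Fin n, Function.Injective f ∧
        (∀ u v : Fin m, H.Adj u v → G.Adj (f u) (f v)) ∧
        ∃ col : Fin k, ∀ u : Fin m, c (f u) = col := by
  classical
  by_cases hm : m = 0
  · refine ⟨0, ⊥, ?_, ?_⟩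
    · intro T hT
      have : 1 ≤ T.card := hT.2 ▸ hs
      obtain ⟨x, -⟩ := Finset.card_pos.1 this
      exact x.elim0
    · intro c
      refine ⟨fun u => (Fin.cast hm u).elim0, ?_, ?_, ⟨0, hk⟩, ?_⟩
      · intro a b _
        exact (Fin.cast hm a).elim0
      · intro u v _
        exact (Fin.cast hm u).elim0
      · intro u
        exact (Fin.cast hm u).elim0
  · have hm1 : 1 ≤ m := Nat.one_le_iff_ne_zero.2 hm
    have hs2 : 2 ≤ s := by
      rcases Nat.lt_or_ge s 2 with h | h
      · have hs1 : s = 1 := by omega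
        subst hs1
        exact ((hH {⟨0, hm1⟩}) (SimpleGraph.isNClique_one.2 ⟨⟨0, hm1⟩, rfl⟩)).elim
      · exact h
    set n₀ := k * (m - 1) + 1 with hn₀
    obtain ⟨V, fV, P, π, hcf, hpart, hext⟩ := folk_good (k := k) hs2 H hH n₀ n₀
    haveI := Fintype.ofFinite V
    let eqv := Fintype.equivFin V
    refine ⟨Fintype.card V,
      { Adj := fun a b => P.Adj (eqv.symm a) (eqv.symm b)
        symm := ⟨fun a b (h : P.Adj (eqv.symm a) (eqv.symm b)) => h.symm⟩
        loopless := ⟨fun a (h : P.Adj (eqv.symm a) (eqv.symm a)) => P.irrefl h⟩ }, ?_, ?_⟩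
    · intro T hT
      have himg : P.IsNClique s (T.image eqv.symm) := by
        constructor
        · rintro a ha b hb hab
          simp only [Finset.coe_image, Set.mem_image, Finset.mem_coe] at ha hb
          obtain ⟨y, hy, rfl⟩ := ha
          obtain ⟨z, hz, rfl⟩ := hb
          exact hT.1 hy hz (fun h => hab (congrArg eqv.symm h))
        · rw [Finset.card_image_of_injective _ eqv.symm.injective, hT.2]
      exact hcf _ himg
    · intro c
      obtain ⟨e, heinj, headj, heπ, h4⟩ := hext (c ∘ eqv)
      have h4' : ∀ j : Fin n₀, ∃ α : Fin k, ∀ v, folkPi0 m n₀ v = j → (c ∘ eqv) (e v) = α :=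
        fun j => h4 j j.isLt
      choose χ hχ using h4'
      have hpig : ∃ α : Fin k, m - 1 < (Finset.univ.filter fun j => χ j = α).card := by
        apply Fintype.exists_lt_card_fiber_of_mul_lt_card
        simp only [Fintype.card_fin]
        omega
      obtain ⟨α, hα⟩ := hpig
      obtain ⟨F, hFsub, hFcard⟩ := Finset.exists_subset_card_eq
        (show m ≤ (Finset.univ.filter fun j => χ j = α).card by omega)
      have hinj : Function.Injective (fun u : Fin m => F.orderEmbOfFin hFcard u) :=
        (F.orderEmbOfFin hFcard).injective
      refine ⟨fun u => eqv (e (⟨_, hinj⟩, u)), ?_, ?_, α, ?_⟩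
      · intro a b h
        have := heinj (eqv.injective h)
        exact congrArg Prod.snd this
      · intro u v h
        have : P.Adj (e (⟨_, hinj⟩, u)) (e (⟨_, hinj⟩, v)) := headj _ _ ⟨rfl, h⟩
        simpa [Equiv.symm_apply_apply] using this
      · intro u
        have h1 : (c ∘ eqv) (e (⟨_, hinj⟩, u)) = χ (F.orderEmbOfFin hFcard u) :=
          hχ (F.orderEmbOfFin hFcard u) _ rfl
        have h2 : χ (F.orderEmbOfFin hFcard u) = α :=
          (Finset.mem_filter.1 (hFsub (F.orderEmbOfFin_mem hFcard u))).2
        exact h1.trans h2
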